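/- Let F₁, F₂ : A → B be lenses, let E : B → C be a lens with E ∘ F₁ = E ∘ F₂ in Lens, and suppose the get functor U E coequalises U F₁ and U F₂ in Cat. Then E coequalises F₁ and F₂ in the category Lens if and only if for every lens G : B → D with G ∘ F₁ = G ∘ F₂, every object B of B and every morphism d of D with source G B, one has φ_{G,B} d = φ_{E,B}(E(φ_{G,B} d)). -/

import Mathlib

universe u

open CategoryTheory CategoryTheory.Limits

namespace LensPaper

section OutDefs

variable {A : Type*} [Category A] {B : Type*} [Category B] {C : Type*} [Category C]

/-- The "out-set" of an object: the collection of all morphisms out of `X`,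
bundled with their targets. -/
def Out (X : A) : Type _ := Σ Y : A, X ⟶ Y

/-- The identity element of an out-set. -/
def Out.id (X : A) : Out X := ⟨X, 𝟙 X⟩

/-- Composition of a morphism out of `X` with a morphism out of its target. -/
def Out.comp {X : A} (u : Out X) (v : Out u.1) : Out X := ⟨v.1, u.2 ≫ v.2⟩

/-- Transport of out-sets along an equality of objects. -/
def Out.cast {X Y : A} (h : X = Y) (u : Out X) : Out Y := ⟨u.1, eqToHom h.symm ≫ u.2⟩

@[simp] theorem Out.cast_rfl {X : A} (u : Out X) : Out.cast rfl u = u := by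
  cases u; simp [Out.cast]; rfl

theorem Out.cast_cast {X Y Z : A} (h₁ : X = Y) (h₂ : Y = Z) (u : Out X) :
    Out.cast h₂ (Out.cast h₁ u) = Out.cast (h₁.trans h₂) u := by
  subst h₁; subst h₂; simp

/-- The action of a functor on out-sets. -/
def mapOut (F : A ⥤ B) {X : A} (u : Out X) : Out (F.obj X) := ⟨F.obj u.1, F.map u.2⟩

theorem mapOut_cast (F : A ⥤ B) {X Y : A} (h : X = Y) (u : Out X) :
    mapOut F (Out.cast h u) = Out.cast (congrArg F.obj h) (mapOut F u) := by
  subst h; simp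

/-- The set of all morphisms of a category, bundled with their endpoints. -/
def Mor (A : Type*) [Category A] : Type _ := Σ (X Y : A), X ⟶ Y

/-- The action of a functor on morphisms, as a function on bundled morphisms. -/
def mapMor (F : A ⥤ B) : Mor A → Mor B := fun m => ⟨F.obj m.1, F.obj m.2.1, F.map m.2.2⟩

/-- The set of composable pairs of morphisms of a category. -/
def CompPair (A : Type*) [Category A] : Type _ := Σ (X Y Z : A), (X ⟶ Y) × (Y ⟶ Z)

/-- The action of a functor on composable pairs. -/
def mapCompPair (F : A ⥤ B) : CompPair A → CompPair B :=
  fun p => ⟨F.obj p.1, F.obj p.2.1, F.obj p.2.2.1, (F.map p.2.2.2.1, F.map p.2.2.2.2)⟩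

/-- A functor is a discrete opfibration if every morphism out of `F.obj X`
has a unique lift to a morphism out of `X`. -/
def IsDiscreteOpfibration (F : A ⥤ B) : Prop :=
  ∀ (X : A) (u : Out (F.obj X)), ∃! v : Out X, mapOut F v = u

/-- A cosieve is an injective-on-objects discrete opfibration. -/
def IsCosieve (F : A ⥤ B) : Prop :=
  IsDiscreteOpfibration F ∧ Function.Injective F.obj

end OutDefs

/-- An (asymmetric delta) lens: a get functor together with put functions
satisfying PutGet, PutId and PutPut. -/
structure DLens (A : Type*) (B : Type*) [Category A] [Category B] where
  get : A ⥤ B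
  put : ∀ (X : A), Out (get.obj X) → Out X
  putGet : ∀ (X : A) (u : Out (get.obj X)), mapOut get (put X u) = u
  putId : ∀ (X : A), put X (Out.id (get.obj X)) = Out.id X
  putPut : ∀ (X : A) (u : Out (get.obj X)) (v : Out u.1) (h : u.1 = get.obj (put X u).1),
      put X (u.comp v) = (put X u).comp (put (put X u).1 (Out.cast h v))

namespace DLens

variable {A : Type*} [Category A] {B : Type*} [Category B] {C : Type*} [Category C]

theorem put_cast (F : DLens A B) {X₁ X₂ : A} (e : X₁ = X₂) (u : Out (F.get.obj X₁)) :
    Out.cast e (F.put X₁ u) = F.put X₂ (Out.cast (congrArg F.get.obj e) u) := by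
  subst e; simp

/-- The identity lens. -/
def id (A : Type*) [Category A] : DLens A A where
  get := Functor.id A
  put X u := u
  putGet X u := rfl
  putId X := rfl
  putPut X u v h := by
    have hv : Out.cast h v = v := Out.cast_rfl v
    rw [hv]

/-- Composition of lenses. -/
def comp (F : DLens A B) (G : DLens B C) : DLens A C where
  get := F.get ⋙ G.get
  put X u := F.put X (G.put (F.get.obj X) u)
  putGet X u := by
    show mapOut G.get (mapOut F.get (F.put X (G.put (F.get.obj X) u))) = u
    rw [F.putGet, G.putGet]
  putId X := by
    show F.put X (G.put (F.get.obj X) (Out.id (G.get.obj (F.get.obj X)))) = Out.id X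
    rw [G.putId, F.putId]
  putPut X u v h := by
    have h₁ : u.1 = G.get.obj (G.put (F.get.obj X) u).1 :=
      (congrArg Sigma.fst (G.putGet (F.get.obj X) u)).symm
    show F.put X (G.put (F.get.obj X) (u.comp v)) = _
    rw [G.putPut (F.get.obj X) u v h₁]
    have h₂ : (G.put (F.get.obj X) u).1 =
        F.get.obj (F.put X (G.put (F.get.obj X) u)).1 :=
      (congrArg Sigma.fst (F.putGet X (G.put (F.get.obj X) u))).symm
    rw [F.putPut X (G.put (F.get.obj X) u) _ h₂]
    rw [put_cast G h₂, Out.cast_cast]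

end DLens

/-- The category of small categories and (asymmetric delta) lenses. -/
def LensCat : Type (u + 1) := Cat.{u, u}

/-- Regard a small category as an object of the category of lenses. -/
def LensCat.of (C : Cat.{u, u}) : LensCat.{u} := C

/-- The underlying small category of an object of the category of lenses. -/
def LensCat.toCat (A : LensCat.{u}) : Cat.{u, u} := A

instance : Category.{u} LensCat.{u} where
  Hom A B := DLens A.toCat B.toCat
  id A := DLens.id A.toCat
  comp F G := F.comp G
  id_comp F := rfl
  comp_id F := rfl
  assoc F G H := rfl

/-- The get functor of a lens, i.e. a morphism of `LensCat` regarded as a `DLens`. -/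
def LensCat.get {A B : LensCat.{u}} (F : A ⟶ B) : A.toCat ⟶ B.toCat := (DLens.get F).toCatHom

/-- The identity-on-objects forgetful functor from the category of lenses to the
category of small categories and functors, sending a lens to its get functor. -/
def lensForget : LensCat.{u} ⥤ Cat.{u, u} where
  obj A := A.toCat
  map F := (DLens.get F).toCatHom
  map_id A := rfl
  map_comp F G := rfl

end LensPaper

namespace LensPaper
-- ===== my auxiliary lemmas =====
section Aux
variable {A : Type*} [Category A] {B : Type*} [Category B] {C : Type*} [Category C]

theorem Out.cast_irrel {X Y : A} (h h' : X = Y) (u : Out X) : Out.cast h u = Out.cast h' u := rfl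

@[simp] theorem Out.cast_refl' {X : A} (h : X = X) (u : Out X) : Out.cast h u = u :=
  Out.cast_rfl u

theorem Out.cast_id' {X Y : A} (h : X = Y) : Out.cast h (Out.id X) = Out.id Y := by
  subst h; simp

theorem Out.cast_comp {X Y : A} (h : X = Y) (u : Out X) (v : Out u.1) :
    Out.cast h (u.comp v) = (Out.cast h u).comp v := by
  simp [Out.cast, Out.comp]; rfl

theorem mapOut_id (F : A ⥤ B) (X : A) : mapOut F (Out.id X) = Out.id (F.obj X) := by
  simp [mapOut, Out.id]; rfl

theorem mapOut_comp (F : A ⥤ B) {X : A} (u : Out X) (v : Out u.1) :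
    mapOut F (u.comp v) = (mapOut F u).comp (mapOut F v) := by
  simp [mapOut, Out.comp]; rfl

theorem mapOut_congr {F G : A ⥤ B} (h : F = G) {X : A} (u : Out X) :
    mapOut G u = Out.cast (congrArg (fun P => P.obj X) h) (mapOut F u) := by
  subst h; simp

theorem mapOut_get_comp {B C D : Type*} [Category B] [Category C] [Category D]
    {Eg : B ⥤ C} {H : C ⥤ D} {Gg : B ⥤ D} (hH : Eg ⋙ H = Gg) {Z : B} (z : Out Z) :
    mapOut H (mapOut Eg z) = Out.cast (congrArg (fun P => P.obj Z) hH).symm (mapOut Gg z) := by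
  subst hH
  rw [Out.cast_refl']
  rfl

end Aux

section Codisc
structure Codisc (T : Type v) : Type v where
  as : T

instance {T : Type v} : Category.{v} (Codisc T) where
  Hom _ _ := PUnit
  id _ := ⟨⟩
  comp _ _ := ⟨⟩

instance {T : Type v} (X Y : Codisc T) : Subsingleton (X ⟶ Y) :=
  inferInstanceAs (Subsingleton PUnit)

theorem Codisc.functor_ext {T : Type v} {A : Type*} [Category A] {P Q : A ⥤ Codisc T}
    (h : ∀ X, P.obj X = Q.obj X) : P = Q :=
  CategoryTheory.Functor.ext h (fun _ _ _ => Subsingleton.elim _ _)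
end Codisc

section SigmaOut
theorem outFun_sigma_ext {C : Type*} [Category C] {D : Type*} [Category D] (H : C ⥤ D)
    {Y Y' : C} (h : Y = Y') {f : Out (H.obj Y) → Out Y} {f' : Out (H.obj Y') → Out Y'}
    (hf : ∀ u, Out.cast h (f u) = f' (Out.cast (congrArg H.obj h) u)) :
    (⟨Y, f⟩ : Σ Z : C, (Out (H.obj Z) → Out Z)) = ⟨Y', f'⟩ := by
  subst h
  have : f = f' := by
    funext u
    have := hf u
    simpa using this
  rw [this]

theorem outFun_sigma_apply {C : Type*} [Category C] {D : Type*} [Category D] (H : C ⥤ D)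
    {Y Y' : C} {f : Out (H.obj Y) → Out Y} {f' : Out (H.obj Y') → Out Y'}
    (hs : (⟨Y, f⟩ : Σ Z : C, (Out (H.obj Z) → Out Z)) = ⟨Y', f'⟩) (h : Y = Y') (u) :
    Out.cast h (f u) = f' (Out.cast (congrArg H.obj h) u) := by
  subst h
  have hf : f = f' := by
    exact eq_of_heq (Sigma.mk.inj_iff.mp hs).2
  subst hf
  simp

end SigmaOut

section DLensAux
universe v1
variable {A : Type*} [Category A] {B : Type*} [Category B]

theorem DLens.put_congr {F G : DLens A B} (h : F = G)
    (X : A) (u : Out (F.get.obj X)) :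
    G.put X (Out.cast (congrArg (fun P => (DLens.get P).obj X) h) u) = F.put X u := by
  subst h; simp

theorem DLens.ext' {F G : DLens A B}
    (h1 : F.get = G.get)
    (h2 : ∀ (X : A) (u : Out (F.get.obj X)),
      G.put X (Out.cast (congrArg (fun P => P.obj X) h1) u) = F.put X u) :
    F = G := by
  obtain ⟨g, p, pg, pi, pp⟩ := F
  obtain ⟨g', p', pg', pi', pp'⟩ := G
  dsimp at h1
  subst h1
  have hp : p = p' := by
    funext X u
    have := h2 X u
    simpa using this.symm
  subst hp
  rfl

end DLensAux

end LensPaper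

namespace LensPaper

theorem lens_step {A B C D : LensCat.{u}} {F1 F2 : A ⟶ B} {E : B ⟶ C}
    (w : F1 ≫ E = F2 ≫ E) {G : B ⟶ D} (hG : F1 ≫ G = F2 ≫ G) (A₀ : LensCat.toCat A)
    (hEX : (DLens.get E).obj ((DLens.get F1).obj A₀) =
      (DLens.get E).obj ((DLens.get F2).obj A₀))
    (hGX : (DLens.get G).obj ((DLens.get F1).obj A₀) =
      (DLens.get G).obj ((DLens.get F2).obj A₀))
    (u : Out ((DLens.get G).obj ((DLens.get F1).obj A₀))) :
    Out.cast hEX (mapOut (DLens.get E) (DLens.put G ((DLens.get F1).obj A₀) u)) =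
      mapOut (DLens.get E) (DLens.put G ((DLens.get F2).obj A₀) (Out.cast hGX u)) := by
  have h1 : DLens.put F2 A₀ (DLens.put G ((DLens.get F2).obj A₀) (Out.cast hGX u)) =
      DLens.put F1 A₀ (DLens.put G ((DLens.get F1).obj A₀) u) :=
    DLens.put_congr hG A₀ u
  have h2 : mapOut (DLens.get (F1 ≫ E))
        (DLens.put F1 A₀ (DLens.put G ((DLens.get F1).obj A₀) u)) =
      mapOut (DLens.get E) (DLens.put G ((DLens.get F1).obj A₀) u) := by
    show mapOut (DLens.get E) (mapOut (DLens.get F1)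
      (DLens.put F1 A₀ (DLens.put G ((DLens.get F1).obj A₀) u))) = _
    rw [DLens.putGet]
  have h3 : mapOut (DLens.get (F2 ≫ E))
        (DLens.put F1 A₀ (DLens.put G ((DLens.get F1).obj A₀) u)) =
      mapOut (DLens.get E) (DLens.put G ((DLens.get F2).obj A₀) (Out.cast hGX u)) := by
    rw [← h1]
    show mapOut (DLens.get E) (mapOut (DLens.get F2)
      (DLens.put F2 A₀ (DLens.put G ((DLens.get F2).obj A₀) (Out.cast hGX u)))) = _
    rw [DLens.putGet]
  have h4 := mapOut_congr (congrArg DLens.get w)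
    (X := A₀) (DLens.put F1 A₀ (DLens.put G ((DLens.get F1).obj A₀) u))
  rw [h3, h2] at h4
  rw [h4]
  rfl


theorem lens_welldef {A B C D : LensCat.{u}} {F1 F2 : A ⟶ B} {E : B ⟶ C}
    (w : F1 ≫ E = F2 ≫ E)
    {wU : lensForget.map F1 ≫ lensForget.map E = lensForget.map F2 ≫ lensForget.map E}
    (hUE : IsColimit (Cofork.ofπ (lensForget.map E) wU))
    {G : B ⟶ D} (hG : F1 ≫ G = F2 ≫ G)
    (H : LensCat.toCat C ⥤ LensCat.toCat D) (hH : DLens.get E ⋙ H = DLens.get G)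
    (X X' : LensCat.toCat B)
    (hEX : (DLens.get E).obj X = (DLens.get E).obj X')
    (hGX : (DLens.get G).obj X = (DLens.get G).obj X')
    (u : Out ((DLens.get G).obj X)) :
    Out.cast hEX (mapOut (DLens.get E) (DLens.put G X u)) =
      mapOut (DLens.get E) (DLens.put G X' (Out.cast hGX u)) := by
  have eH : ∀ Z : LensCat.toCat B,
      H.obj ((DLens.get E).obj Z) = (DLens.get G).obj Z :=
    fun Z => congrArg (fun P => P.obj Z) hH
  let T : Type u := Σ Y : LensCat.toCat C, (Out (H.obj Y) → Out Y)
  let χ : LensCat.toCat B ⟶ Cat.of (Codisc T) := Functor.toCatHom (C := ↑(LensCat.toCat B))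
    { obj := fun Z => ⟨⟨(DLens.get E).obj Z,
        fun v => mapOut (DLens.get E) (DLens.put G Z (Out.cast (eH Z) v))⟩⟩
      map := fun _ => ⟨⟩
      map_id := fun _ => rfl
      map_comp := fun _ _ => rfl }
  have hχ : lensForget.map F1 ≫ χ = lensForget.map F2 ≫ χ := by
    apply Cat.ext
    apply Codisc.functor_ext
    intro A₀
    have hEA : (DLens.get E).obj ((DLens.get F1).obj A₀) =
        (DLens.get E).obj ((DLens.get F2).obj A₀) :=
      congrArg (fun P => (DLens.get P).obj A₀) w
    have hGA : (DLens.get G).obj ((DLens.get F1).obj A₀) =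
        (DLens.get G).obj ((DLens.get F2).obj A₀) :=
      congrArg (fun P => (DLens.get P).obj A₀) hG
    refine congrArg Codisc.mk (outFun_sigma_ext H hEA ?_)
    intro v
    show Out.cast hEA (mapOut (DLens.get E) (DLens.put G ((DLens.get F1).obj A₀)
        (Out.cast (eH ((DLens.get F1).obj A₀)) v))) =
      mapOut (DLens.get E) (DLens.put G ((DLens.get F2).obj A₀)
        (Out.cast (eH ((DLens.get F2).obj A₀)) (Out.cast (congrArg H.obj hEA) v)))
    rw [lens_step w hG A₀ hEA hGA (Out.cast (eH ((DLens.get F1).obj A₀)) v)]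
    rw [Out.cast_cast, Out.cast_cast]
  have hχd : lensForget.map E ≫ Cofork.IsColimit.desc hUE χ hχ = χ := by
    simpa only [Cofork.π_ofπ] using Cofork.IsColimit.π_desc' hUE χ hχ
  have e1 : (Cofork.IsColimit.desc hUE χ hχ).toFunctor.obj ((DLens.get E).obj X) = χ.toFunctor.obj X :=
    congrArg (fun P : LensCat.toCat B ⟶ Cat.of (Codisc T) => P.toFunctor.obj X) hχd
  have e2 : (Cofork.IsColimit.desc hUE χ hχ).toFunctor.obj ((DLens.get E).obj X') = χ.toFunctor.obj X' :=
    congrArg (fun P : LensCat.toCat B ⟶ Cat.of (Codisc T) => P.toFunctor.obj X') hχd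
  have e3 : χ.toFunctor.obj X = χ.toFunctor.obj X' := by
    rw [← e1, ← e2, hEX]
  have e4 : (χ.toFunctor.obj X).as = (χ.toFunctor.obj X').as := congrArg Codisc.as e3
  have e5 := outFun_sigma_apply H e4 hEX (Out.cast (eH X).symm u)
  simp only [Out.cast_cast, Out.cast_refl'] at e5
  exact e5


theorem exists_unique_factor {B C D : LensCat.{u}} {E : B ⟶ C} {G : B ⟶ D}
    (H : LensCat.toCat C ⥤ LensCat.toCat D)
    (hH : DLens.get E ⋙ H = DLens.get G)
    (hHuniq : ∀ H' : LensCat.toCat C ⥤ LensCat.toCat D,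
      DLens.get E ⋙ H' = DLens.get G → H' = H)
    (welldef : ∀ (X X' : LensCat.toCat B)
      (hEX : (DLens.get E).obj X = (DLens.get E).obj X')
      (hGX : (DLens.get G).obj X = (DLens.get G).obj X')
      (u : Out ((DLens.get G).obj X)),
      Out.cast hEX (mapOut (DLens.get E) (DLens.put G X u)) =
        mapOut (DLens.get E) (DLens.put G X' (Out.cast hGX u)))
    (hcond : ∀ (X : LensCat.toCat B) (u : Out ((DLens.get G).obj X)),
      DLens.put G X u = DLens.put E X (mapOut (DLens.get E) (DLens.put G X u)))
    (sec : LensCat.toCat C → LensCat.toCat B)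
    (hsec : ∀ Y, (DLens.get E).obj (sec Y) = Y) :
    ∃! K : C ⟶ D, E ≫ K = G := by
  have eH : ∀ Z : LensCat.toCat B,
      H.obj ((DLens.get E).obj Z) = (DLens.get G).obj Z :=
    fun Z => congrArg (fun P => P.obj Z) hH
  have eY : ∀ Y : LensCat.toCat C, H.obj Y = (DLens.get G).obj (sec Y) :=
    fun Y => ((congrArg H.obj (hsec Y)).symm).trans (eH (sec Y))
  have knorm : ∀ (X : LensCat.toCat B) (u : Out (H.obj ((DLens.get E).obj X))),
      Out.cast (hsec ((DLens.get E).obj X))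
        (mapOut (DLens.get E) (DLens.put G (sec ((DLens.get E).obj X))
          (Out.cast (eY ((DLens.get E).obj X)) u))) =
      mapOut (DLens.get E) (DLens.put G X (Out.cast (eH X) u)) := by
    intro X u
    refine (welldef (sec ((DLens.get E).obj X)) X (hsec _)
      ((eY ((DLens.get E).obj X)).symm.trans (eH X)) (Out.cast (eY _) u)).trans ?_
    rw [Out.cast_cast]
  let K : C ⟶ D :=
    { get := H
      put := fun Y u => Out.cast (hsec Y) (mapOut (DLens.get E)
        (DLens.put G (sec Y) (Out.cast (eY Y) u)))
      putGet := by
        intro Y u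
        show mapOut H (Out.cast (hsec Y) (mapOut (DLens.get E)
          (DLens.put G (sec Y) (Out.cast (eY Y) u)))) = u
        rw [mapOut_cast, mapOut_get_comp hH, DLens.putGet, Out.cast_cast,
          Out.cast_cast, Out.cast_refl']
      putId := by
        intro Y
        show Out.cast (hsec Y) (mapOut (DLens.get E) (DLens.put G (sec Y)
          (Out.cast (eY Y) (Out.id (H.obj Y))))) = Out.id Y
        rw [Out.cast_id', DLens.putId, mapOut_id, Out.cast_id']
      putPut := by
        intro Y u v h
        have hput1 : (Out.cast (eY Y) u).1 =
            (DLens.get G).obj ((DLens.put G (sec Y) (Out.cast (eY Y) u)).1) :=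
          (congrArg Sigma.fst (DLens.putGet G (sec Y) (Out.cast (eY Y) u))).symm
        show Out.cast (hsec Y) (mapOut (DLens.get E) (DLens.put G (sec Y)
            (Out.cast (eY Y) (u.comp v)))) =
          (Out.cast (hsec Y) (mapOut (DLens.get E)
            (DLens.put G (sec Y) (Out.cast (eY Y) u)))).comp
          (Out.cast (hsec ((DLens.get E).obj
              ((DLens.put G (sec Y) (Out.cast (eY Y) u)).1)))
            (mapOut (DLens.get E) (DLens.put G (sec ((DLens.get E).obj
                ((DLens.put G (sec Y) (Out.cast (eY Y) u)).1)))
              (Out.cast (eY ((DLens.get E).obj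
                ((DLens.put G (sec Y) (Out.cast (eY Y) u)).1))) (Out.cast h v)))))
        rw [Out.cast_comp (eY Y) u v]
        rw [DLens.putPut G (sec Y) (Out.cast (eY Y) u) v hput1]
        rw [mapOut_comp]
        refine (Out.cast_comp _ _ _).trans ?_
        refine congrArg (Out.comp _) ?_
        refine Eq.trans ?_ (knorm ((DLens.put G (sec Y) (Out.cast (eY Y) u)).1) (Out.cast h v)).symm
        exact congrArg (fun w => mapOut (DLens.get E) (DLens.put G _ w)) (Out.cast_cast _ _ _).symm }
  have hEK : E ≫ K = G := by
    refine DLens.ext' (F := E ≫ K) (G := G) hH ?_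
    intro X u
    show DLens.put G X (Out.cast (congrArg (fun P => P.obj X) hH) u) =
      DLens.put E X (Out.cast (hsec ((DLens.get E).obj X)) (mapOut (DLens.get E)
        (DLens.put G (sec ((DLens.get E).obj X))
          (Out.cast (eY ((DLens.get E).obj X)) u))))
    rw [knorm X u]
    rw [← hcond X (Out.cast (eH X) u)]
    rfl
  have helper : ∀ (K' : C ⟶ D) (hK' : E ≫ K' = G) (Y : LensCat.toCat C)
      (pf : (DLens.get K').obj Y = (DLens.get G).obj (sec Y))
      (u : Out ((DLens.get K').obj Y)),
      DLens.put K' Y u = Out.cast (hsec Y)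
        (mapOut (DLens.get E) (DLens.put G (sec Y) (Out.cast pf u))) := by
    intro K' hK' Y pf u
    have hstep : ∀ (u₀ : Out ((DLens.get K').obj ((DLens.get E).obj (sec Y)))),
        DLens.put K' ((DLens.get E).obj (sec Y)) u₀ =
          mapOut (DLens.get E) (DLens.put G (sec Y)
            (Out.cast (congrArg (fun P => (DLens.get P).obj (sec Y)) hK') u₀)) := by
      intro u₀
      have h6 := DLens.put_congr hK' (sec Y) u₀
      have h7 : mapOut (DLens.get E) (DLens.put G (sec Y)
          (Out.cast (congrArg (fun P => (DLens.get P).obj (sec Y)) hK') u₀)) =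
          DLens.put K' ((DLens.get E).obj (sec Y)) u₀ := by
        conv_lhs => rw [h6]
        show mapOut (DLens.get E) (DLens.put E (sec Y)
          (DLens.put K' ((DLens.get E).obj (sec Y)) u₀)) = _
        rw [DLens.putGet]
      exact h7.symm
    have h8 := DLens.put_cast K' (hsec Y)
      (Out.cast (congrArg (DLens.get K').obj (hsec Y)).symm u)
    simp only [Out.cast_cast, Out.cast_refl'] at h8
    rw [← h8, hstep]
    refine congrArg (fun v => Out.cast (hsec Y) (mapOut (DLens.get E) (DLens.put G (sec Y) v))) ?_
    exact Out.cast_cast _ _ _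
  refine ⟨K, hEK, ?_⟩
  intro m hm
  have h1 : DLens.get m = DLens.get K :=
    hHuniq (DLens.get m) (congrArg DLens.get hm)
  refine DLens.ext' h1 ?_
  intro Y u
  refine (helper K hEK Y (eY Y) (Out.cast (congrArg (fun P => P.obj Y) h1) u)).trans ?_
  refine Eq.trans ?_ (helper m hm Y ((congrArg (fun P => P.obj Y) h1).trans (eY Y)) u).symm
  rw [Out.cast_cast]

end LensPaper

open CategoryTheory CategoryTheory.Limits LensPaper

/-- Let `F1, F2 : A ⟶ B` be lenses and `E : B ⟶ C` a cofork of
them in `Lens` whose get functor coequalises `U F1` and `U F2` in `Cat`. Then `E`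
coequalises `F1` and `F2` in `Lens` iff for every lens `G` coforking `F1` and
`F2`, every object `X` and every morphism `u` out of `G X`, one has
`φ_{G,X} u = φ_{E,X} (E (φ_{G,X} u))`. -/
theorem condition_for_reflection (A B C : LensCat.{u}) (F1 F2 : A ⟶ B)
    (E : B ⟶ C) (w : F1 ≫ E = F2 ≫ E)
    (wU : lensForget.map F1 ≫ lensForget.map E = lensForget.map F2 ≫ lensForget.map E)
    (hUE : IsColimit (Cofork.ofπ (lensForget.map E) wU)) :
    Nonempty (IsColimit (Cofork.ofπ E w)) ↔
      ∀ (D : LensCat.{u}) (G : B ⟶ D), F1 ≫ G = F2 ≫ G →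
        ∀ (X : B.toCat) (u : Out ((DLens.get G).obj X)),
          DLens.put G X u = DLens.put E X (mapOut (DLens.get E) (DLens.put G X u)) := by
  constructor
  · rintro ⟨hE⟩ D G hG X u
    obtain ⟨K, hK, -⟩ := Cofork.IsColimit.existsUnique hE G hG
    rw [Cofork.π_ofπ] at hK
    subst hK
    show DLens.put E X (DLens.put K ((DLens.get E).obj X) u) =
      DLens.put E X (mapOut (DLens.get E)
        (DLens.put E X (DLens.put K ((DLens.get E).obj X) u)))
    rw [DLens.putGet]
  · intro hcond
    -- surjectivity of the get functor of E on objects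
    have hsurj : ∀ Y : LensCat.toCat C, ∃ X : LensCat.toCat B, (DLens.get E).obj X = Y := by
      have hepi : ∀ {Z : Cat.{u, u}} (k l : lensForget.obj C ⟶ Z),
          lensForget.map E ≫ k = lensForget.map E ≫ l → k = l := by
        intro Z k l hkl
        refine Cofork.IsColimit.hom_ext hUE ?_
        simpa only [Cofork.π_ofπ] using hkl
      let T := ULift.{u} Prop
      let χ₁ : LensCat.toCat C ⟶ Cat.of (Codisc T) := Functor.toCatHom (C := ↑(LensCat.toCat C))
        { obj := fun Z => ⟨⟨∃ X : LensCat.toCat B, (DLens.get E).obj X = Z⟩⟩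
          map := fun _ => ⟨⟩
          map_id := fun _ => rfl
          map_comp := fun _ _ => rfl }
      let χ₂ : LensCat.toCat C ⟶ Cat.of (Codisc T) := Functor.toCatHom (C := ↑(LensCat.toCat C))
        { obj := fun _ => ⟨⟨True⟩⟩
          map := fun _ => ⟨⟩
          map_id := fun _ => rfl
          map_comp := fun _ _ => rfl }
      have h12 : χ₁ = χ₂ := by
        apply hepi
        apply Cat.ext
        apply Codisc.functor_ext
        intro X
        exact congrArg (fun p : Prop => (⟨⟨p⟩⟩ : Codisc T))
          (propext ⟨fun _ => trivial, fun _ => ⟨X, rfl⟩⟩)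
      intro Y
      have h0 := congrArg (fun P : LensCat.toCat C ⟶ Cat.of (Codisc T) =>
        (P.toFunctor.obj Y).as.down) h12
      exact of_eq_true h0
    choose sec hsec using hsurj
    refine ⟨Cofork.IsColimit.ofExistsUnique fun s => ?_⟩
    have hGU : lensForget.map F1 ≫ lensForget.map s.π =
        lensForget.map F2 ≫ lensForget.map s.π :=
      Cat.ext (congrArg DLens.get s.condition)
    have hH := Cofork.IsColimit.π_desc' hUE (lensForget.map s.π) hGU
    rw [Cofork.π_ofπ] at hH
    simp only [Cofork.π_ofπ]
    exact exists_unique_factor (E := E) (G := s.π)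
      (Cofork.IsColimit.desc hUE (lensForget.map s.π) hGU).toFunctor (congrArg Cat.Hom.toFunctor hH)
      (fun H' hH' => congrArg Cat.Hom.toFunctor (Cofork.IsColimit.hom_ext hUE (k := H'.toCatHom)
        (by rw [Cofork.π_ofπ]; exact Cat.ext (hH'.trans (congrArg Cat.Hom.toFunctor hH).symm))))
      (fun X X' hEX hGX u => lens_welldef w hUE s.condition _ (congrArg Cat.Hom.toFunctor hH) X X' hEX hGX u)
      (hcond s.pt s.π s.condition) sec hsec
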